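/- If x and t are irrational, then ε·S₂/S₁ → 0 as ε → 0, where S₁ = ∑_{(m,n)∈R_ε} cos²(mπx)cos²(nπt) and S₂ = ∑_{(m,n)∈R_ε} mπ cos(mπx) sin(mπx) cos²(nπt), with R_ε the quarter-ring {(k,l)∈ℕ² : α₋ < ε√(k²+l²) < α₊} for fixed 0 < α₋ < α₊. -/

import Mathlib

open Real Filter
open Finset

/-- The quarter ring of strongly unstable modes (scaled by `ε`):
`{(k,l) ∈ ℕ² : α₋ < ε·√(k²+l²) < α₊}`. -/
def ringSet (am ap ε : ℝ) : Set (ℕ × ℕ) :=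
  {p | am < ε * Real.sqrt ((p.1 : ℝ) ^ 2 + (p.2 : ℝ) ^ 2) ∧
       ε * Real.sqrt ((p.1 : ℝ) ^ 2 + (p.2 : ℝ) ^ 2) < ap}

lemma abs_geom_range_le {z : ℂ} (hz : ‖z‖ = 1) (h1 : z ≠ 1) (n : ℕ) :
    ‖∑ m ∈ range n, z ^ m‖ ≤ 2 / ‖z - 1‖ := by
  rw [geom_sum_eq h1, norm_div]
  have hpos : 0 < ‖z - 1‖ := by
    simpa [sub_eq_zero] using h1
  gcongr
  calc ‖z ^ n - 1‖ ≤ ‖z ^ n‖ + 1 := by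
        simpa using (norm_sub_le (z ^ n) 1)
    _ ≤ 2 := by simp [norm_pow, hz]; norm_num

lemma abs_weighted_range_le {z : ℂ} (hz : ‖z‖ = 1) (h1 : z ≠ 1) (n : ℕ) :
    ‖∑ m ∈ range n, (m : ℂ) * z ^ m‖ ≤ 2 * n * (2 / ‖z - 1‖) := by
  set C := 2 / ‖z - 1‖ with hC
  have hC0 : 0 ≤ C := by positivity
  have hb := Finset.sum_range_by_parts (fun i => (i : ℂ)) (fun i => z ^ i) n
  simp only [smul_eq_mul] at hb
  rw [hb]
  have h2 : ∀ i : ℕ, ((i:ℕ)+1 : ℂ) - (i : ℂ) = 1 := by intro i; push_cast; ring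
  calc ‖_‖ ≤ ‖(n - 1 : ℕ) * ∑ i ∈ range n, z ^ i‖
        + ‖∑ i ∈ range (n - 1), (((i+1 : ℕ) : ℂ) - (i : ℂ)) * ∑ j ∈ range (i+1), z ^ j‖ :=
        norm_sub_le _ _
    _ ≤ (n - 1 : ℕ) * C + (n - 1 : ℕ) * C := by
        gcongr
        · rw [norm_mul]
          gcongr
          · simp
          · exact abs_geom_range_le hz h1 n
        · calc ‖_‖ ≤ ∑ i ∈ range (n-1), ‖(((i+1:ℕ):ℂ) - (i:ℂ)) * ∑ j ∈ range (i+1), z ^ j‖ :=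
              norm_sum_le _ _
          _ ≤ ∑ i ∈ range (n-1), C := by
              refine Finset.sum_le_sum fun i _ => ?_
              rw [norm_mul]
              push_cast [h2]
              simpa using abs_geom_range_le hz h1 (i+1)
          _ = (n - 1 : ℕ) * C := by simp [mul_comm]
    _ ≤ 2 * n * C := by
        have : ((n - 1 : ℕ) : ℝ) ≤ (n : ℝ) := by exact_mod_cast Nat.sub_le n 1
        nlinarith [hC0]

lemma sum_Icc_eq_sub {M : Type*} [AddCommGroup M] (f : ℕ → M) {a b : ℕ} (h : a ≤ b + 1) :
    ∑ m ∈ Icc a b, f m = ∑ m ∈ range (b+1), f m - ∑ m ∈ range a, f m := by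
  rw [← Finset.Ico_add_one_right_eq_Icc, Finset.range_eq_Ico,
    ← Finset.sum_Ico_consecutive f (Nat.zero_le a) (show a ≤ b + 1 from h)]
  simp [Nat.succ_eq_add_one]

lemma trig_bounds (y : ℝ) (hy : Irrational y) :
    ∃ C : ℝ, 0 < C ∧ (∀ a b : ℕ, |∑ m ∈ Icc a b, Real.cos (2*π*y*m)| ≤ C) ∧
      (∀ a b : ℕ, |∑ m ∈ Icc a b, (m:ℝ) * Real.sin (2*π*y*m)| ≤ (b+1) * C) := by
  set z : ℂ := Complex.exp ((2*π*y : ℝ) * Complex.I) with hzdef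
  have habs : ‖z‖ = 1 := Complex.norm_exp_ofReal_mul_I _
  have hz1 : z ≠ 1 := by
    intro h
    rcases Complex.exp_eq_one_iff.1 h with ⟨n, hn⟩
    have him := congrArg Complex.im hn
    simp [Complex.ofReal_mul, Complex.mul_im, Complex.add_im] at him
    have : y = (n : ℝ) := by
      have hpi := Real.pi_ne_zero
      have h2 : (2*π) * y = (2*π) * (n:ℝ) := by push_cast at him ⊢; linarith
      exact mul_left_cancel₀ (mul_ne_zero two_ne_zero hpi) h2
    exact hy ⟨(n : ℚ), by push_cast [this]; norm_num⟩
  set C' : ℝ := 2 / ‖z - 1‖ with hC'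
  have hC'0 : 0 < C' := by
    have : z - 1 ≠ 0 := sub_ne_zero.2 hz1
    have := norm_pos_iff.mpr this
    positivity
  have hpow : ∀ m : ℕ, z ^ m = Complex.exp ((2*π*y*m : ℝ) * Complex.I) := by
    intro m
    rw [hzdef, ← Complex.exp_nat_mul]
    push_cast
    ring_nf
  have hre : ∀ m : ℕ, (z ^ m).re = Real.cos (2*π*y*m) := by
    intro m; rw [hpow m, Complex.exp_ofReal_mul_I_re]
  have him : ∀ m : ℕ, (z ^ m).im = Real.sin (2*π*y*m) := by
    intro m; rw [hpow m, Complex.exp_ofReal_mul_I_im]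
  refine ⟨4 * C', by positivity, ?_, ?_⟩
  · intro a b
    by_cases hab : a ≤ b + 1
    · have : ∑ m ∈ Icc a b, Real.cos (2*π*y*m) = (∑ m ∈ Icc a b, z ^ m).re := by
        rw [Complex.re_sum]; exact Finset.sum_congr rfl fun m _ => (hre m).symm
      rw [this]
      calc |(∑ m ∈ Icc a b, z ^ m).re| ≤ ‖∑ m ∈ Icc a b, z ^ m‖ :=
            Complex.abs_re_le_norm _
        _ ≤ 2 * C' := by
            rw [sum_Icc_eq_sub _ hab]
            calc ‖_‖ ≤ ‖∑ m ∈ range (b+1), z^m‖ + ‖∑ m ∈ range a, z^m‖ :=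
                  norm_sub_le _ _
              _ ≤ C' + C' := add_le_add (abs_geom_range_le habs hz1 _) (abs_geom_range_le habs hz1 _)
              _ = 2 * C' := by ring
        _ ≤ 4 * C' := by linarith
    · rw [Finset.Icc_eq_empty (by omega)]
      simp only [Finset.sum_empty, abs_zero]
      positivity
  · intro a b
    by_cases hab : a ≤ b + 1
    · have : ∑ m ∈ Icc a b, (m:ℝ) * Real.sin (2*π*y*m) = (∑ m ∈ Icc a b, (m:ℂ) * z ^ m).im := by
        rw [Complex.im_sum]
        refine Finset.sum_congr rfl fun m _ => ?_
        rw [Complex.mul_im, ← him m]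
        simp
      rw [this]
      calc |(∑ m ∈ Icc a b, (m:ℂ) * z ^ m).im| ≤ ‖∑ m ∈ Icc a b, (m:ℂ) * z ^ m‖ :=
            Complex.abs_im_le_norm _
        _ ≤ 2 * (b+1) * C' + 2 * a * C' := by
            rw [sum_Icc_eq_sub _ hab]
            calc ‖_‖ ≤ ‖∑ m ∈ range (b+1), (m:ℂ)*z^m‖ + ‖∑ m ∈ range a, (m:ℂ)*z^m‖ :=
                  norm_sub_le _ _
              _ ≤ 2 * (b+1) * C' + 2 * a * C' := by
                  have h1 := abs_weighted_range_le habs hz1 (b+1)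
                  have h2 := abs_weighted_range_le habs hz1 a
                  push_cast at h1 h2 ⊢
                  linarith
        _ ≤ (b+1) * (4 * C') := by
            have : (a : ℝ) ≤ (b:ℝ) + 1 := by exact_mod_cast hab
            nlinarith
    · rw [Finset.Icc_eq_empty (by omega)]
      simp only [Finset.sum_empty, abs_zero]
      positivity
-- assume defs from s2 (paste)
open Finset Real

noncomputable def NB (ap ε : ℝ) : ℕ := ⌊ap / ε⌋₊ + 1

open scoped Classical in
noncomputable def ringFinset (am ap ε : ℝ) : Finset (ℕ × ℕ) :=
  (Finset.range (NB ap ε) ×ˢ Finset.range (NB ap ε)).filter (fun p => p ∈ ringSet am ap ε)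

open scoped Classical in
noncomputable def rowFinset (am ap ε : ℝ) (n : ℕ) : Finset ℕ :=
  (Finset.range (NB ap ε)).filter (fun m => (m, n) ∈ ringSet am ap ε)

lemma fst_lt_NB {am ap ε : ℝ} (hε : 0 < ε) {p : ℕ × ℕ} (hp : p ∈ ringSet am ap ε) :
    p.1 < NB ap ε ∧ p.2 < NB ap ε := by
  obtain ⟨-, h2⟩ := hp
  have hs : Real.sqrt ((p.1 : ℝ) ^ 2 + (p.2 : ℝ) ^ 2) < ap / ε := by
    rw [lt_div_iff₀ hε]; linarith [h2]
  have key : ∀ k : ℕ, (k:ℝ)^2 ≤ (p.1 : ℝ) ^ 2 + (p.2 : ℝ) ^ 2 → k < NB ap ε := by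
    intro k hk
    have : (k : ℝ) ≤ Real.sqrt ((p.1 : ℝ) ^ 2 + (p.2 : ℝ) ^ 2) := by
      have := Real.sqrt_le_sqrt hk
      rwa [Real.sqrt_sq (by positivity)] at this
    have hkap : (k : ℝ) ≤ ap / ε := le_of_lt (lt_of_le_of_lt this hs)
    have : k ≤ ⌊ap / ε⌋₊ := Nat.le_floor hkap
    simp only [NB]; omega
  exact ⟨key p.1 (le_add_of_nonneg_right (by positivity)),
    key p.2 (le_add_of_nonneg_left (by positivity))⟩

lemma mem_ringFinset {am ap ε : ℝ} (hε : 0 < ε) {p : ℕ × ℕ} :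
    p ∈ ringFinset am ap ε ↔ p ∈ ringSet am ap ε := by
  classical
  constructor
  · intro h
    simp only [ringFinset, Finset.mem_filter] at h
    exact h.2
  · intro h
    obtain ⟨h1, h2⟩ := fst_lt_NB hε h
    simp only [ringFinset, Finset.mem_filter, Finset.mem_product, Finset.mem_range]
    exact ⟨⟨h1, h2⟩, h⟩

lemma tsum_indicator_eq {am ap ε : ℝ} (hε : 0 < ε) (f : ℕ × ℕ → ℝ) :
    ∑' p : ℕ × ℕ, Set.indicator (ringSet am ap ε) f p = ∑ p ∈ ringFinset am ap ε, f p := by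
  classical
  rw [tsum_eq_sum (s := ringFinset am ap ε) (fun b hb => by
    apply Set.indicator_of_notMem
    exact fun hmem => hb ((mem_ringFinset hε).2 hmem))]
  refine Finset.sum_congr rfl fun p hp => ?_
  exact Set.indicator_of_mem ((mem_ringFinset hε).1 hp) f

lemma ring_sum_decomp {am ap ε : ℝ} (F : ℕ → ℕ → ℝ) :
    ∑ p ∈ ringFinset am ap ε, F p.1 p.2 =
      ∑ n ∈ range (NB ap ε), ∑ m ∈ rowFinset am ap ε n, F m n := by
  classical
  rw [ringFinset, Finset.sum_filter, Finset.sum_product_right]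
  refine Finset.sum_congr rfl fun n _ => ?_
  rw [rowFinset, Finset.sum_filter]

lemma row_sum_bound {am ap ε : ℝ} (hε : 0 ≤ ε) (n : ℕ) (g : ℕ → ℝ) (B : ℝ) (hB : 0 ≤ B)
    (h : ∀ a b : ℕ, b < NB ap ε → |∑ m ∈ Finset.Icc a b, g m| ≤ B) :
    |∑ m ∈ rowFinset am ap ε n, g m| ≤ B := by
  classical
  rcases Finset.eq_empty_or_nonempty (rowFinset am ap ε n) with he | hne
  · rw [he]; simpa using hB
  · set a := Finset.min' _ hne with ha
    set b := Finset.max' _ hne with hb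
    have h1 : a ∈ rowFinset am ap ε n := Finset.min'_mem _ hne
    have h3 : b ∈ rowFinset am ap ε n := Finset.max'_mem _ hne
    simp only [rowFinset, Finset.mem_filter, Finset.mem_range, ringSet,
      Set.mem_setOf_eq] at h1 h3
    have hmono : ∀ k l : ℕ, k ≤ l →
        Real.sqrt ((k:ℝ)^2 + (n:ℝ)^2) ≤ Real.sqrt ((l:ℝ)^2 + (n:ℝ)^2) := by
      intro k l hkl
      apply Real.sqrt_le_sqrt
      have : (k:ℝ) ≤ (l:ℝ) := by exact_mod_cast hkl
      nlinarith
    have hIcc : rowFinset am ap ε n = Finset.Icc a b := by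
      apply Finset.ext
      intro m
      simp only [Finset.mem_Icc]
      constructor
      · intro hm; exact ⟨Finset.min'_le _ _ hm, Finset.le_max' _ _ hm⟩
      · rintro ⟨hmin, hmax⟩
        simp only [rowFinset, Finset.mem_filter, Finset.mem_range, ringSet,
          Set.mem_setOf_eq]
        refine ⟨lt_of_le_of_lt hmax h3.1, ?_, ?_⟩
        · exact lt_of_lt_of_le h1.2.1
            (mul_le_mul_of_nonneg_left (hmono a m hmin) hε)
        · exact lt_of_le_of_lt
            (mul_le_mul_of_nonneg_left (hmono m b hmax) hε) h3.2.2
    rw [hIcc]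
    exact h a b h3.1

lemma ring_sum_bound {am ap ε : ℝ} (F : ℕ → ℕ → ℝ) (B : ℝ)
    (h : ∀ n, |∑ m ∈ rowFinset am ap ε n, F m n| ≤ B) :
    |∑ p ∈ ringFinset am ap ε, F p.1 p.2| ≤ NB ap ε * B := by
  rw [ring_sum_decomp]
  calc |∑ n ∈ range (NB ap ε), ∑ m ∈ rowFinset am ap ε n, F m n|
      ≤ ∑ n ∈ range (NB ap ε), |∑ m ∈ rowFinset am ap ε n, F m n| :=
        Finset.abs_sum_le_sum_abs _ _
    _ ≤ ∑ _n ∈ range (NB ap ε), B := Finset.sum_le_sum fun n _ => h n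
    _ = NB ap ε * B := by simp [mul_comm]

lemma ring_swap_sum {am ap ε : ℝ} (f : ℕ × ℕ → ℝ) :
    ∑ p ∈ ringFinset am ap ε, f p.swap = ∑ p ∈ ringFinset am ap ε, f p := by
  classical
  apply Finset.sum_nbij' (i := fun p => Prod.swap p) (j := fun p => Prod.swap p)
  all_goals
    intros
    simp only [ringFinset, Finset.mem_filter, Finset.mem_product, Finset.mem_range] at * <;>
      simp_all [ringSet, Prod.swap, add_comm]

set_option maxHeartbeats 2000000 in
lemma ring_card_lower {am ap : ℝ} (h0 : 0 < am) (h1 : am < ap) :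
    ∃ c ε₀ : ℝ, 0 < c ∧ 0 < ε₀ ∧ ∀ ε : ℝ, 0 < ε → ε ≤ ε₀ →
      c / ε ^ 2 ≤ ((ringFinset am ap ε).card : ℝ) := by
  classical
  obtain ⟨b, hab, hba⟩ : ∃ b, am < b ∧ b < ap := ⟨(am + ap) / 2, by linarith, by linarith⟩
  have hb0 : 0 < b := by linarith
  set δ := Real.sqrt ((ap ^ 2 - b ^ 2) / 2) with hδdef
  have hδ0 : 0 < δ := Real.sqrt_pos.2 (by nlinarith)
  have hδsq : δ ^ 2 = (ap ^ 2 - b ^ 2) / 2 := Real.sq_sqrt (by nlinarith)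
  have hbd : b ^ 2 + δ ^ 2 < ap ^ 2 := by rw [hδsq]; nlinarith
  refine ⟨(b - am) * δ / 2, (b - am) / 2, by nlinarith, by nlinarith, ?_⟩
  intro ε hε hεle
  set P : Finset (ℕ × ℕ) :=
    Finset.Ioc ⌊am / ε⌋₊ ⌊b / ε⌋₊ ×ˢ Finset.range (⌊δ / ε⌋₊ + 1) with hPdef
  have hsub : P ⊆ ringFinset am ap ε := by
    intro p hp
    rw [hPdef, Finset.mem_product, Finset.mem_Ioc, Finset.mem_range] at hp
    obtain ⟨⟨hm1, hm2⟩, hn⟩ := hp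
    have hm1' : am / ε < (p.1 : ℝ) := by
      calc am / ε < ⌊am / ε⌋₊ + 1 := Nat.lt_floor_add_one _
        _ ≤ (p.1 : ℝ) := by exact_mod_cast hm1
    have hm2' : (p.1 : ℝ) ≤ b / ε := le_trans (by exact_mod_cast Nat.cast_le.2 hm2)
      (Nat.floor_le (by positivity))
    have hn' : (p.2 : ℝ) ≤ δ / ε := le_trans (by exact_mod_cast Nat.cast_le.2 (Nat.lt_succ_iff.1 hn))
      (Nat.floor_le (by positivity))
    rw [mem_ringFinset hε]
    constructor
    · have : (p.1 : ℝ) ≤ Real.sqrt ((p.1:ℝ)^2 + (p.2:ℝ)^2) := by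
        rw [show ((p.1:ℝ)) = Real.sqrt ((p.1:ℝ)^2) from (Real.sqrt_sq (by positivity)).symm]
        apply Real.sqrt_le_sqrt
        rw [Real.sq_sqrt (by positivity)]
        exact le_add_of_nonneg_right (by positivity)
      calc am = ε * (am / ε) := by field_simp
        _ < ε * (p.1 : ℝ) := by exact mul_lt_mul_of_pos_left hm1' hε
        _ ≤ ε * Real.sqrt ((p.1:ℝ)^2 + (p.2:ℝ)^2) := mul_le_mul_of_nonneg_left this hε.le
    · have hsq : (p.1:ℝ)^2 + (p.2:ℝ)^2 ≤ (b^2 + δ^2) / ε^2 := by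
        have h1 : (p.1:ℝ)^2 ≤ (b/ε)^2 := by
          apply sq_le_sq' _ hm2'
          nlinarith [(by positivity : (0:ℝ) ≤ (p.1:ℝ))]
        have h2 : (p.2:ℝ)^2 ≤ (δ/ε)^2 := by
          apply sq_le_sq' _ hn'
          nlinarith [(by positivity : (0:ℝ) ≤ (p.2:ℝ))]
        have := add_le_add h1 h2
        calc (p.1:ℝ)^2 + (p.2:ℝ)^2 ≤ (b/ε)^2 + (δ/ε)^2 := this
          _ = (b^2 + δ^2) / ε^2 := by field_simp
      calc ε * Real.sqrt ((p.1:ℝ)^2 + (p.2:ℝ)^2)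
          ≤ ε * Real.sqrt ((b^2 + δ^2) / ε^2) := by
            exact mul_le_mul_of_nonneg_left (Real.sqrt_le_sqrt hsq) hε.le
        _ < ε * Real.sqrt ((ap / ε)^2) := by
            apply mul_lt_mul_of_pos_left _ hε
            apply Real.sqrt_lt_sqrt (by positivity)
            rw [div_pow, div_lt_div_iff₀ (by positivity) (by positivity)]
            nlinarith [pow_pos hε 2]
        _ = ap := by
            rw [Real.sqrt_sq (le_of_lt (div_pos (by linarith) hε))]
            field_simp
  have hcard : (P.card : ℝ) ≤ ((ringFinset am ap ε).card : ℝ) := by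
    exact_mod_cast Finset.card_le_card hsub
  have hPcard : P.card = (⌊b / ε⌋₊ - ⌊am / ε⌋₊) * (⌊δ / ε⌋₊ + 1) := by
    rw [hPdef, Finset.card_product, Nat.card_Ioc, Finset.card_range]
  have hmono : ⌊am / ε⌋₊ ≤ ⌊b / ε⌋₊ := Nat.floor_le_floor (by rw [div_le_div_iff₀ hε hε]; nlinarith)
  have hc1 : (b - am) / (2 * ε) ≤ ((⌊b / ε⌋₊ - ⌊am / ε⌋₊ : ℕ) : ℝ) := by
    rw [Nat.cast_sub hmono]
    have hf1 : (⌊am / ε⌋₊ : ℝ) ≤ am / ε := Nat.floor_le (by positivity)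
    have hf2 : b / ε - 1 ≤ (⌊b / ε⌋₊ : ℝ) := by
      have := Nat.lt_floor_add_one (b / ε)
      linarith
    have hkey : (b - am) / ε - 1 ≤ (⌊b / ε⌋₊ : ℝ) - ⌊am / ε⌋₊ := by
      have : (b - am) / ε = b / ε - am / ε := by field_simp
      linarith
    have h2 : (b - am) / (2 * ε) ≤ (b - am) / ε - 1 := by
      have h3 : (1:ℝ) ≤ (b - am) / (2 * ε) := by
        rw [le_div_iff₀ (by positivity)]; linarith
      have h4 : (b - am) / ε = 2 * ((b - am) / (2 * ε)) := by
        field_simp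
      linarith
    linarith
  have hc2 : δ / ε ≤ ((⌊δ / ε⌋₊ + 1 : ℕ) : ℝ) := by
    push_cast
    exact (Nat.lt_floor_add_one (δ / ε)).le
  calc (b - am) * δ / 2 / ε ^ 2 = ((b - am) / (2 * ε)) * (δ / ε) := by ring
    _ ≤ ((⌊b / ε⌋₊ - ⌊am / ε⌋₊ : ℕ) : ℝ) * ((⌊δ / ε⌋₊ + 1 : ℕ) : ℝ) := by
        apply mul_le_mul hc1 hc2 (by positivity) (Nat.cast_nonneg _)
    _ = (P.card : ℝ) := by rw [hPcard]; push_cast [Nat.cast_sub hmono]; ring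
    _ ≤ _ := hcard

/-- `S₁ = ∑_{(m,n)∈R_ε} cos²(mπx) cos²(nπt)`. -/
noncomputable def S1 (am ap ε x t : ℝ) : ℝ :=
  ∑' p : ℕ × ℕ,
    Set.indicator (ringSet am ap ε)
      (fun p => Real.cos ((p.1 : ℝ) * Real.pi * x) ^ 2 *
                Real.cos ((p.2 : ℝ) * Real.pi * t) ^ 2) p

/-- `S₂ = ∑_{(m,n)∈R_ε} mπ cos(mπx) sin(mπx) cos²(nπt)`. -/
noncomputable def S2 (am ap ε x t : ℝ) : ℝ :=
  ∑' p : ℕ × ℕ,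
    Set.indicator (ringSet am ap ε)
      (fun p => (p.1 : ℝ) * Real.pi *
                Real.cos ((p.1 : ℝ) * Real.pi * x) *
                Real.sin ((p.1 : ℝ) * Real.pi * x) *
                Real.cos ((p.2 : ℝ) * Real.pi * t) ^ 2) p

lemma S1_lower {am ap ε x t Cx Ct : ℝ} (hε : 0 < ε) (hCx0 : 0 ≤ Cx) (hCt0 : 0 ≤ Ct)
    (hcosx : ∀ a b : ℕ, |∑ m ∈ Finset.Icc a b, Real.cos (2*π*x*m)| ≤ Cx)
    (hcost : ∀ a b : ℕ, |∑ m ∈ Finset.Icc a b, Real.cos (2*π*t*m)| ≤ Ct) :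
    ((ringFinset am ap ε).card : ℝ) - (NB ap ε : ℝ) * (2*Cx + Ct) ≤ 4 * S1 am ap ε x t := by
  have hS1 : S1 am ap ε x t = ∑ p ∈ ringFinset am ap ε,
      (Real.cos ((p.1:ℝ)*π*x)^2 * Real.cos ((p.2:ℝ)*π*t)^2) := tsum_indicator_eq hε _
  have h4 : 4 * S1 am ap ε x t = ((ringFinset am ap ε).card : ℝ)
      + (∑ p ∈ ringFinset am ap ε, Real.cos (2*π*x*p.1))
      + (∑ p ∈ ringFinset am ap ε, Real.cos (2*π*t*p.2))
      + (∑ p ∈ ringFinset am ap ε, Real.cos (2*π*x*p.1) * Real.cos (2*π*t*p.2)) := by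
    rw [hS1, Finset.mul_sum]
    rw [Finset.sum_congr rfl (fun p _ => show
        4 * (Real.cos ((p.1:ℝ)*π*x)^2 * Real.cos ((p.2:ℝ)*π*t)^2) =
        1 + Real.cos (2*π*x*p.1) + Real.cos (2*π*t*p.2)
          + Real.cos (2*π*x*p.1) * Real.cos (2*π*t*p.2) from by
      rw [Real.cos_sq, Real.cos_sq,
        show (2*((p.1:ℝ)*π*x)) = 2*π*x*(p.1:ℝ) by ring,
        show (2*((p.2:ℝ)*π*t)) = 2*π*t*(p.2:ℝ) by ring]
      ring)]
    rw [Finset.sum_add_distrib, Finset.sum_add_distrib, Finset.sum_add_distrib,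
      Finset.sum_const, nsmul_eq_mul, mul_one]
  have hA : |∑ p ∈ ringFinset am ap ε, Real.cos (2*π*x*p.1)| ≤ (NB ap ε : ℝ) * Cx :=
    ring_sum_bound (fun m _ => Real.cos (2*π*x*m)) Cx
      (fun n => row_sum_bound hε.le n _ Cx hCx0 (fun a b _ => hcosx a b))
  have hB : |∑ p ∈ ringFinset am ap ε, Real.cos (2*π*t*p.2)| ≤ (NB ap ε : ℝ) * Ct := by
    have hswap := ring_swap_sum (am := am) (ap := ap) (ε := ε)
      (fun q => Real.cos (2*π*t*q.1))
    simp only [Prod.fst_swap] at hswap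
    rw [hswap]
    exact ring_sum_bound (fun m _ => Real.cos (2*π*t*m)) Ct
      (fun n => row_sum_bound hε.le n _ Ct hCt0 (fun a b _ => hcost a b))
  have hD : |∑ p ∈ ringFinset am ap ε, Real.cos (2*π*x*p.1) * Real.cos (2*π*t*p.2)|
      ≤ (NB ap ε : ℝ) * Cx := by
    apply ring_sum_bound (fun m n => Real.cos (2*π*x*m) * Real.cos (2*π*t*n)) Cx
    intro n
    apply row_sum_bound hε.le n _ Cx hCx0
    intro a b _
    rw [← Finset.sum_mul, abs_mul]
    calc |∑ m ∈ Finset.Icc a b, Real.cos (2*π*x*m)| * |Real.cos (2*π*t*n)|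
        ≤ Cx * 1 := mul_le_mul (hcosx a b) (Real.abs_cos_le_one _) (abs_nonneg _) hCx0
      _ = Cx := mul_one Cx
  have h1 := abs_le.1 hA
  have h2 := abs_le.1 hB
  have h3 := abs_le.1 hD
  rw [h4]
  linarith [h1.1, h2.1, h3.1]

lemma S2_upper {am ap ε x t Cx : ℝ} (hε : 0 < ε) (hCx0 : 0 ≤ Cx)
    (hsinx : ∀ a b : ℕ, b < NB ap ε →
      |∑ m ∈ Finset.Icc a b, (m:ℝ) * Real.sin (2*π*x*m)| ≤ (NB ap ε : ℝ) * Cx) :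
    |S2 am ap ε x t| ≤ (π/2) * (NB ap ε : ℝ)^2 * Cx := by
  have hS2 : S2 am ap ε x t = ∑ p ∈ ringFinset am ap ε,
      ((p.1 : ℝ) * π * Real.cos ((p.1:ℝ)*π*x) * Real.sin ((p.1:ℝ)*π*x) *
        Real.cos ((p.2:ℝ)*π*t)^2) := tsum_indicator_eq hε _
  have hexp : ∀ p : ℕ × ℕ, (p.1 : ℝ) * π * Real.cos ((p.1:ℝ)*π*x) * Real.sin ((p.1:ℝ)*π*x) *
      Real.cos ((p.2:ℝ)*π*t)^2 = (π/4) * ((p.1:ℝ) * Real.sin (2*π*x*p.1))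
        + (π/4) * ((p.1:ℝ) * Real.sin (2*π*x*p.1) * Real.cos (2*π*t*p.2)) := by
    intro p
    rw [Real.cos_sq, show (2*π*x*(p.1:ℝ)) = 2*((p.1:ℝ)*π*x) by ring,
      show (2*((p.2:ℝ)*π*t)) = 2*π*t*(p.2:ℝ) by ring, Real.sin_two_mul]
    ring
  have hU : |∑ p ∈ ringFinset am ap ε, (p.1:ℝ) * Real.sin (2*π*x*p.1)|
      ≤ (NB ap ε : ℝ) * ((NB ap ε : ℝ) * Cx) := by
    apply ring_sum_bound (fun m _ => (m:ℝ) * Real.sin (2*π*x*m)) _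
    intro n
    exact row_sum_bound hε.le n _ _ (by positivity) (fun a b hb => hsinx a b hb)
  have hV : |∑ p ∈ ringFinset am ap ε, (p.1:ℝ) * Real.sin (2*π*x*p.1) * Real.cos (2*π*t*p.2)|
      ≤ (NB ap ε : ℝ) * ((NB ap ε : ℝ) * Cx) := by
    apply ring_sum_bound (fun m n => (m:ℝ) * Real.sin (2*π*x*m) * Real.cos (2*π*t*n)) _
    intro n
    apply row_sum_bound hε.le n _ _ (by positivity)
    intro a b hb
    rw [← Finset.sum_mul, abs_mul]
    calc _ ≤ ((NB ap ε : ℝ) * Cx) * 1 :=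
          mul_le_mul (hsinx a b hb) (Real.abs_cos_le_one _) (abs_nonneg _) (by positivity)
      _ = (NB ap ε : ℝ) * Cx := mul_one _
  rw [hS2, Finset.sum_congr rfl (fun p _ => hexp p), Finset.sum_add_distrib,
    ← Finset.mul_sum, ← Finset.mul_sum]
  calc |π/4 * (∑ p ∈ ringFinset am ap ε, (p.1:ℝ) * Real.sin (2*π*x*p.1))
        + π/4 * (∑ p ∈ ringFinset am ap ε, (p.1:ℝ) * Real.sin (2*π*x*p.1) * Real.cos (2*π*t*p.2))|
      ≤ π/4 * |∑ p ∈ ringFinset am ap ε, (p.1:ℝ) * Real.sin (2*π*x*p.1)|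
        + π/4 * |∑ p ∈ ringFinset am ap ε, (p.1:ℝ) * Real.sin (2*π*x*p.1) * Real.cos (2*π*t*p.2)| := by
        calc _ ≤ |π/4 * _| + |π/4 * _| := abs_add_le _ _
          _ = _ := by rw [abs_mul, abs_mul, abs_of_pos (by positivity : (0:ℝ) < π/4)]
    _ ≤ π/4 * ((NB ap ε : ℝ) * ((NB ap ε : ℝ) * Cx)) + π/4 * ((NB ap ε : ℝ) * ((NB ap ε : ℝ) * Cx)) := by
        exact add_le_add (mul_le_mul_of_nonneg_left hU (by positivity))
          (mul_le_mul_of_nonneg_left hV (by positivity))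
    _ = (π/2) * (NB ap ε : ℝ)^2 * Cx := by ring

open Filter in
/-- For irrational `x, t` and the quarter ring `R_ε` with fixed radii `0 < α₋ < α₊`,
one has `ε·S₂/S₁ → 0` as `ε → 0⁺`. -/
theorem eps_S2_div_S1_tendsto (am ap : ℝ) (h0 : 0 < am) (h1 : am < ap)
    (x t : ℝ) (hx : Irrational x) (ht : Irrational t) :
    Tendsto (fun ε : ℝ => ε * S2 am ap ε x t / S1 am ap ε x t)
      (nhdsWithin 0 (Set.Ioi 0)) (nhds 0) := by
  obtain ⟨Cx, hCx0, hcosx, hsinx⟩ := trig_bounds x hx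
  obtain ⟨Ct, hCt0, hcost, -⟩ := trig_bounds t ht
  obtain ⟨c, ε₀, hc0, hε₀0, hcard⟩ := ring_card_lower h0 h1
  have hap0 : 0 < ap := h0.trans h1
  have hK0 : 0 < 2*Cx + Ct := by linarith
  set ε₁ := min ε₀ (min ap (c / (4 * ap * (2*Cx + Ct)))) with hε₁def
  have hε₁0 : 0 < ε₁ := lt_min hε₀0 (lt_min hap0 (by positivity))
  apply squeeze_zero_norm' (a := fun ε : ℝ => (16 * π * ap^2 * Cx / c) * ε)
  · filter_upwards [Ioo_mem_nhdsGT_of_mem (Set.left_mem_Ico.2 hε₁0)] with ε hε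
    obtain ⟨hε0, hεlt⟩ := hε
    have hNB : (NB ap ε : ℝ) ≤ 2 * ap / ε := by
      have hf : (⌊ap/ε⌋₊ : ℝ) ≤ ap / ε := Nat.floor_le (by positivity)
      have h2' : (1:ℝ) ≤ ap / ε := by
        rw [le_div_iff₀ hε0]
        have : ε ≤ ap := le_trans hεlt.le (le_trans (min_le_right _ _) (min_le_left _ _))
        linarith
      have : (NB ap ε : ℝ) = (⌊ap/ε⌋₊ : ℝ) + 1 := by simp [NB]
      rw [this]
      have : 2 * ap / ε = ap/ε + ap/ε := by ring
      linarith
    have hcardε := hcard ε hε0 (le_trans hεlt.le (min_le_left _ _))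
    have hsinx' : ∀ a b : ℕ, b < NB ap ε →
        |∑ m ∈ Finset.Icc a b, (m:ℝ) * Real.sin (2*π*x*m)| ≤ (NB ap ε : ℝ) * Cx := by
      intro a b hb
      refine le_trans (hsinx a b) (mul_le_mul_of_nonneg_right ?_ hCx0.le)
      exact_mod_cast Nat.succ_le_of_lt hb
    have hS1 := S1_lower (am := am) (ap := ap) (ε := ε) (x := x) (t := t) hε0 hCx0.le hCt0.le hcosx hcost
    have hS2 := S2_upper (am := am) (ap := ap) (ε := ε) (x := x) (t := t) hε0 hCx0.le hsinx'
    have hEbound : (NB ap ε : ℝ) * (2*Cx+Ct) ≤ (2*ap/ε) * (2*Cx+Ct) :=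
      mul_le_mul_of_nonneg_right hNB hK0.le
    have hhalf : (2*ap/ε) * (2*Cx+Ct) ≤ c / (2*ε^2) := by
      have hεle : ε ≤ c / (4*ap*(2*Cx+Ct)) :=
        le_trans hεlt.le (le_trans (min_le_right _ _) (min_le_right _ _))
      have hX : ε * (4*ap*(2*Cx+Ct)) ≤ c := by
        rw [← le_div_iff₀ (by positivity)]
        exact hεle
      rw [div_mul_eq_mul_div, div_le_div_iff₀ hε0 (by positivity)]
      nlinarith [hε0, sq_nonneg ε]
    have hS1low : c / (8*ε^2) ≤ S1 am ap ε x t := by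
      have h4 : c/ε^2 - c/(2*ε^2) ≤ 4 * S1 am ap ε x t := by linarith
      have heq : c/ε^2 - c/(2*ε^2) = c/(2*ε^2) := by
        field_simp
        ring
      have heq2 : c/(8*ε^2) = (c/(2*ε^2))/4 := by ring
      linarith
    have hS1pos : 0 < S1 am ap ε x t := lt_of_lt_of_le (by positivity) hS1low
    have hNBsq : ((NB ap ε : ℝ))^2 ≤ (2*ap/ε)^2 := by
      apply sq_le_sq' _ hNB
      have := Nat.cast_nonneg (α := ℝ) (NB ap ε)
      nlinarith
    have hS2' : |S2 am ap ε x t| ≤ (π/2) * (2*ap/ε)^2 * Cx := by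
      refine le_trans hS2 ?_
      apply mul_le_mul_of_nonneg_right _ hCx0.le
      exact mul_le_mul_of_nonneg_left hNBsq (by positivity)
    have hnum : |ε * S2 am ap ε x t| ≤ 2 * π * ap^2 * Cx / ε := by
      rw [abs_mul, abs_of_pos hε0]
      calc ε * |S2 am ap ε x t| ≤ ε * ((π/2) * (2*ap/ε)^2 * Cx) :=
            mul_le_mul_of_nonneg_left hS2' hε0.le
        _ = 2 * π * ap^2 * Cx / ε := by field_simp
    rw [Real.norm_eq_abs, abs_div, abs_of_pos hS1pos]
    calc |ε * S2 am ap ε x t| / S1 am ap ε x t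
        ≤ (2 * π * ap^2 * Cx / ε) / (c / (8*ε^2)) :=
          div_le_div₀ (by positivity) hnum (by positivity) hS1low
      _ = (16 * π * ap^2 * Cx / c) * ε := by field_simp; ring
  · have h : Tendsto (fun ε : ℝ => (16*π*ap^2*Cx/c) * ε) (nhds 0)
        (nhds ((16*π*ap^2*Cx/c) * 0)) := (tendsto_id (α := ℝ)).const_mul _
    rw [mul_zero] at h
    exact h.mono_left nhdsWithin_le_nhds
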